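/- In a Wheeler graph, for any label a ∈ Σ, the set of nodes that have an incoming edge labeled a forms an interval (a set of consecutive elements) in the Wheeler ordering, and these intervals for distinct labels appear in increasing order of the labels. -/
import Mathlib


/-- In a Wheeler graph, for every label `a` the set of nodes having an incoming
edge labeled `a` is an interval of the node ordering (among nodes with positive
in-degree), and for `a < a'` every node with incoming label `a` precedes every
node with incoming label `a'`. -/
theorem stmt_1 {V A : Type} [LinearOrder V] [LinearOrder A]
    (E : V → V → A → Prop)
    (hfirst : ∀ v w : V, (∀ u a, ¬ E u v a) → (∃ u a, E u w a) → v < w)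
    (hA : ∀ u v a u' v' a', E u v a → E u' v' a' → a < a' → v < v')
    (hB : ∀ u v a u' v' a', E u v a → E u' v' a' → a = a' → u < u' → v ≤ v') :
    (∀ (a : A) (v v' x : V), (∃ u, E u v a) → (∃ u, E u v' a) →
        v ≤ x → x ≤ v' → (∃ u b, E u x b) → ∃ u, E u x a) ∧
    (∀ (a a' : A) (v v' : V), a < a' →
        (∃ u, E u v a) → (∃ u, E u v' a') → v < v') := by
  constructor
  · rintro a v v' x ⟨u, huv⟩ ⟨u', huv'⟩ hvx hxv' ⟨w, b, hwx⟩
    rcases lt_trichotomy b a with h | h | h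
    · exact absurd (hA w x b u v a hwx huv h) (not_lt.mpr hvx)
    · exact ⟨w, h ▸ hwx⟩
    · exact absurd (hA u' v' a w x b huv' hwx h) (not_lt.mpr hxv')
  · rintro a a' v v' h ⟨u, hu⟩ ⟨u', hu'⟩
    exact hA u v a u' v' a' hu hu' h
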